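/- Regret bound for AdaRem (Theorem 1). Let d ≥ 1, T ≥ 1, η > 0, λ ∈ [0,1), β ∈ [0,1), ε > 0, and let D_∞, G₂ ≥ 0. Let F ⊆ ℝ^d be a nonempty convex set such that ‖x − y‖_∞ ≤ D_∞ for all x, y ∈ F. For t = 1, …, T let θ_t ∈ F and g_t ∈ ℝ^d with ‖g_t‖₂ ≤ G₂, and let f_t : ℝ^d → ℝ satisfy the subgradient inequality f_t(x) ≥ f_t(θ_t) + ⟨g_t, x − θ_t⟩ for all x ∈ F. Define m_1 = 0 ∈ ℝ^d and m_{t+1} = β·m_t + (1−β)·g_t, and define per-coordinate step sizes η_{t,i} = (η/√t)·(1 + λ^t · g_{t,i}·m_{t,i} / (|g_{t,i}|·max_{1≤j≤d}|m_{t,j}| + ε)) for 1 ≤ i ≤ d. Suppose that for each t = 1, …, T, θ_{t+1} ∈ F and θ_{t+1} minimizes the function x ↦ ∑_{i=1}^d η_{t,i}^{−1}·(x_i − (θ_{t,i} − η_{t,i}·g_{t,i}))² over F. Then for every θ* ∈ F, ∑_{t=1}^T (f_t(θ_t) − f_t(θ*)) ≤ (D_∞²·d)/(η·(1−λ)³)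 · ((5−4λ)·√T + 2λ − 1) + (D_∞²·d)/(2η·(1−λ)) + G₂²·d·η·(2√T − 1). -/

import Mathlib

private lemma tel_sum (u : ℕ → ℝ) : ∀ T, 1 ≤ T →
    ∑ t ∈ Finset.Icc 2 T, (u t - u (t - 1)) = u T - u 1 := by
  intro T
  induction T with
  | zero => omega
  | succ n ih =>
    intro _
    rcases Nat.lt_or_ge n 1 with h | h
    · interval_cases n
      rw [Finset.Icc_eq_empty (by omega : ¬ (2:ℕ) ≤ 1)]
      simp
    · rw [Finset.sum_Icc_succ_top (by omega : 2 ≤ n + 1), ih h]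
      simp only [Nat.add_sub_cancel]
      ring

private lemma tel_sum2 (A B : ℕ → ℝ) : ∀ T, 1 ≤ T →
    ∑ t ∈ Finset.Icc 1 T, (A t - B t)
      = A 1 - B T + ∑ t ∈ Finset.Icc 2 T, (A t - B (t - 1)) := by
  intro T
  induction T with
  | zero => omega
  | succ n ih =>
    intro _
    rcases Nat.lt_or_ge n 1 with h | h
    · interval_cases n
      rw [Finset.Icc_eq_empty (by omega : ¬ (2:ℕ) ≤ 1), Finset.Icc_self]
      simp
    · rw [Finset.sum_Icc_succ_top (by omega : 1 ≤ n + 1), ih h,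
        Finset.sum_Icc_succ_top (by omega : 2 ≤ n + 1)]
      simp only [Nat.add_sub_cancel]
      ring

private lemma geom_aux (lam : ℝ) (h1 : lam < 1) : ∀ T, 1 ≤ T →
    ∑ t ∈ Finset.Icc 2 T, lam ^ (t - 1) ≤ (lam - lam ^ T) / (1 - lam) := by
  intro T
  induction T with
  | zero => omega
  | succ n ih =>
    intro _
    have hlt : (0:ℝ) < 1 - lam := by linarith
    rcases Nat.lt_or_ge n 1 with h | h
    · interval_cases n
      rw [Finset.Icc_eq_empty (by omega : ¬ (2:ℕ) ≤ 1)]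
      simp
    · rw [Finset.sum_Icc_succ_top (by omega : 2 ≤ n + 1)]
      have hkey : (lam - lam ^ n) / (1 - lam) + lam ^ (n + 1 - 1)
          = (lam - lam ^ (n + 1)) / (1 - lam) := by
        simp only [Nat.add_sub_cancel]
        field_simp
        ring
      linarith [ih h]

private lemma sum_inv_sqrt : ∀ T : ℕ, 1 ≤ T →
    ∑ t ∈ Finset.Icc 1 T, (Real.sqrt t)⁻¹ ≤ 2 * Real.sqrt T - 1 := by
  intro T
  induction T with
  | zero => omega
  | succ n ih =>
    intro _
    rcases Nat.lt_or_ge n 1 with h | h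
    · interval_cases n
      rw [Finset.Icc_self]
      norm_num
    · rw [Finset.sum_Icc_succ_top (by omega : 1 ≤ n + 1)]
      have hn := ih h
      have hb2 : Real.sqrt ((n:ℝ) + 1) ^ 2 = (n:ℝ) + 1 := Real.sq_sqrt (by positivity)
      have ha2 : Real.sqrt (n:ℝ) ^ 2 = (n:ℝ) := Real.sq_sqrt (by positivity)
      have hab : Real.sqrt (n:ℝ) ≤ Real.sqrt ((n:ℝ) + 1) := Real.sqrt_le_sqrt (by linarith)
      have hbpos : 0 < Real.sqrt ((n:ℝ) + 1) := Real.sqrt_pos.2 (by positivity)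
      have hcast : ((n + 1 : ℕ) : ℝ) = (n:ℝ) + 1 := by push_cast; ring
      have key : (Real.sqrt ((n:ℝ) + 1))⁻¹ ≤ 2 * (Real.sqrt ((n:ℝ) + 1) - Real.sqrt (n:ℝ)) := by
        rw [inv_eq_one_div, div_le_iff₀ hbpos]
        nlinarith [sq_nonneg (Real.sqrt ((n:ℝ) + 1) - Real.sqrt (n:ℝ))]
      rw [hcast]
      linarith


set_option maxHeartbeats 1000000 in

/-- Regret bound for AdaRem (Theorem 1).  The iterates `θ t` follow the AdaRem
update `θ (t+1) = Π_{F, diag(lr t ⁻¹)} (θ t - lr t ⊙ g t)` with per-coordinate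
step sizes `lr t i = (η/√t)(1 + λ^t gᵗⁱ mᵗⁱ/(|gᵗⁱ| maxⱼ|mᵗʲ| + ε))` built from
the exponential moving average `m` of the gradients, and the regret against any
comparator `θ* ∈ F` is bounded by `O(√T)`. -/
theorem adarem_regret_bound
    (d T : ℕ) (hd : 1 ≤ d) (hT : 1 ≤ T)
    (η lam β ε Dinf G2 : ℝ)
    (hη : 0 < η) (hlam0 : 0 ≤ lam) (hlam1 : lam < 1)
    (hβ0 : 0 ≤ β) (hβ1 : β < 1) (hε : 0 < ε) (hD : 0 ≤ Dinf) (hG : 0 ≤ G2)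
    (F : Set (Fin d → ℝ)) (hFne : F.Nonempty) (hFconv : Convex ℝ F)
    (hFdiam : ∀ x ∈ F, ∀ y ∈ F, ∀ i, |x i - y i| ≤ Dinf)
    (θ : ℕ → Fin d → ℝ) (g : ℕ → Fin d → ℝ) (m : ℕ → Fin d → ℝ)
    (f : ℕ → (Fin d → ℝ) → ℝ) (lr : ℕ → Fin d → ℝ)
    (hθF : ∀ t ∈ Finset.Icc 1 T, θ t ∈ F)
    (hg : ∀ t ∈ Finset.Icc 1 T, Real.sqrt (∑ i, g t i ^ 2) ≤ G2)
    (hsubgrad : ∀ t ∈ Finset.Icc 1 T, ∀ x ∈ F,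
      f t (θ t) + ∑ i, g t i * (x i - θ t i) ≤ f t x)
    (hm1 : ∀ i, m 1 i = 0)
    (hmrec : ∀ t, 1 ≤ t → ∀ i, m (t + 1) i = β * m t i + (1 - β) * g t i)
    (hlr : ∀ t, 1 ≤ t → ∀ i,
      lr t i = (η / Real.sqrt t) *
        (1 + lam ^ t * (g t i * m t i) / (|g t i| * (⨆ j, |m t j|) + ε)))
    (hproj : ∀ t ∈ Finset.Icc 1 T,
      θ (t + 1) ∈ F ∧
      ∀ x ∈ F,
        ∑ i, (lr t i)⁻¹ * (θ (t + 1) i - (θ t i - lr t i * g t i)) ^ 2 ≤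
          ∑ i, (lr t i)⁻¹ * (x i - (θ t i - lr t i * g t i)) ^ 2) :
    ∀ θs ∈ F,
      ∑ t ∈ Finset.Icc 1 T, (f t (θ t) - f t θs) ≤
        Dinf ^ 2 * d / (η * (1 - lam) ^ 3) *
            ((5 - 4 * lam) * Real.sqrt T + 2 * lam - 1)
          + Dinf ^ 2 * d / (2 * η * (1 - lam))
          + G2 ^ 2 * d * η * (2 * Real.sqrt T - 1) := by
  intro θs hθs
  haveI : Nonempty (Fin d) := Fin.pos_iff_nonempty.mp hd
  -- basic facts
  have h1lam : (0:ℝ) < 1 - lam := by linarith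
  have hsq1 : ∀ t : ℕ, 1 ≤ t → 1 ≤ Real.sqrt t := by
    intro t ht
    rw [show (1:ℝ) = Real.sqrt 1 by simp]
    exact Real.sqrt_le_sqrt (by exact_mod_cast ht)
  have hsqp : ∀ t : ℕ, 1 ≤ t → 0 < Real.sqrt t := fun t ht =>
    lt_of_lt_of_le one_pos (hsq1 t ht)
  have hlamt0 : ∀ t : ℕ, 0 ≤ lam ^ t := fun t => pow_nonneg hlam0 t
  have hlam_le : ∀ t : ℕ, 1 ≤ t → lam ^ t ≤ lam := fun t ht =>
    pow_le_of_le_one hlam0 hlam1.le (by omega)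
  have hlamt_lt1 : ∀ t : ℕ, 1 ≤ t → lam ^ t < 1 := fun t ht =>
    lt_of_le_of_lt (hlam_le t ht) hlam1
  -- bounds on the learning rates
  have hlrb : ∀ t : ℕ, 1 ≤ t → ∀ i,
      η / Real.sqrt t * (1 - lam ^ t) ≤ lr t i ∧
      lr t i ≤ η / Real.sqrt t * (1 + lam ^ t) := by
    intro t ht i
    have hS : |m t i| ≤ ⨆ j, |m t j| :=
      le_ciSup (f := fun j => |m t j|) (Set.Finite.bddAbove (Set.finite_range _)) i
    have hS0 : (0:ℝ) ≤ ⨆ j, |m t j| := (abs_nonneg _).trans hS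
    have hden : 0 < |g t i| * (⨆ j, |m t j|) + ε := by positivity
    have hnum : |g t i * m t i| ≤ |g t i| * (⨆ j, |m t j|) + ε := by
      rw [abs_mul]
      nlinarith [abs_nonneg (g t i), abs_nonneg (m t i)]
    have hq : |g t i * m t i / (|g t i| * (⨆ j, |m t j|) + ε)| ≤ 1 := by
      rw [abs_div, abs_of_pos hden]
      exact div_le_one_of_le₀ hnum hden.le
    have hq2 : |lam ^ t * (g t i * m t i) / (|g t i| * (⨆ j, |m t j|) + ε)| ≤ lam ^ t := by
      rw [mul_div_assoc, abs_mul, abs_of_nonneg (hlamt0 t)]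
      nlinarith [hlamt0 t, hq, abs_nonneg (g t i * m t i / (|g t i| * (⨆ j, |m t j|) + ε))]
    have h1 := abs_le.1 hq2
    have hpos : (0:ℝ) < η / Real.sqrt t := div_pos hη (hsqp t ht)
    rw [hlr t ht i]
    constructor
    · apply mul_le_mul_of_nonneg_left _ hpos.le
      linarith [h1.1]
    · apply mul_le_mul_of_nonneg_left _ hpos.le
      linarith [h1.2]
  have hlrpos : ∀ t : ℕ, 1 ≤ t → ∀ i, 0 < lr t i := by
    intro t ht i
    have h2 : 0 < η / Real.sqrt t * (1 - lam ^ t) :=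
      mul_pos (div_pos hη (hsqp t ht)) (by linarith [hlamt_lt1 t ht])
    linarith [(hlrb t ht i).1]
  -- inverse learning rate bounds
  have hinv_up : ∀ t : ℕ, 1 ≤ t → ∀ i,
      (lr t i)⁻¹ ≤ Real.sqrt t / (η * (1 - lam ^ t)) := by
    intro t ht i
    have hlow := (hlrb t ht i).1
    have hpos : 0 < η / Real.sqrt t * (1 - lam ^ t) :=
      mul_pos (div_pos hη (hsqp t ht)) (by linarith [hlamt_lt1 t ht])
    have h2 : (lr t i)⁻¹ ≤ (η / Real.sqrt t * (1 - lam ^ t))⁻¹ :=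
      inv_anti₀ hpos hlow
    have h3 : (η / Real.sqrt t * (1 - lam ^ t))⁻¹ = Real.sqrt t / (η * (1 - lam ^ t)) := by
      rw [div_mul_eq_mul_div, inv_div]
    linarith [h2, h3.le]
  have hinv_lo : ∀ t : ℕ, 1 ≤ t → ∀ i,
      Real.sqrt t / (η * (1 + lam ^ t)) ≤ (lr t i)⁻¹ := by
    intro t ht i
    have hhigh := (hlrb t ht i).2
    have h2 : (η / Real.sqrt t * (1 + lam ^ t))⁻¹ ≤ (lr t i)⁻¹ :=
      inv_anti₀ (hlrpos t ht i) hhigh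
    have h3 : (η / Real.sqrt t * (1 + lam ^ t))⁻¹ = Real.sqrt t / (η * (1 + lam ^ t)) := by
      rw [div_mul_eq_mul_div, inv_div]
    linarith [h2, h3.le]
  -- abbreviations
  set A : ℕ → ℝ := fun t => ∑ i, (lr t i)⁻¹ * (θ t i - θs i) ^ 2 with hA
  set B : ℕ → ℝ := fun t => ∑ i, (lr t i)⁻¹ * (θ (t + 1) i - θs i) ^ 2 with hB
  -- variational inequality for the projection
  have hVI : ∀ t ∈ Finset.Icc 1 T,
      0 ≤ ∑ i, (lr t i)⁻¹ *
        ((θ (t + 1) i - (θ t i - lr t i * g t i)) * (θs i - θ (t + 1) i)) := by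
    intro t ht
    have ht1 : 1 ≤ t := (Finset.mem_Icc.1 ht).1
    by_contra hBneg
    push_neg at hBneg
    set Bq : ℝ := ∑ i, (lr t i)⁻¹ *
      ((θ (t + 1) i - (θ t i - lr t i * g t i)) * (θs i - θ (t + 1) i)) with hBq
    set Cq : ℝ := ∑ i, (lr t i)⁻¹ * (θs i - θ (t + 1) i) ^ 2 with hCq
    have hC0 : 0 ≤ Cq := Finset.sum_nonneg fun i _ =>
      mul_nonneg (inv_nonneg.2 (hlrpos t ht1 i).le) (sq_nonneg _)
    set s : ℝ := min 1 ((-Bq) / (Cq + 1)) with hs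
    have hs0 : 0 < s := lt_min one_pos (div_pos (by linarith) (by linarith))
    have hs1 : s ≤ 1 := min_le_left _ _
    have hsC : s * Cq ≤ -Bq := by
      have h1 : s ≤ (-Bq) / (Cq + 1) := min_le_right _ _
      have h2 : s * Cq ≤ ((-Bq) / (Cq + 1)) * Cq := mul_le_mul_of_nonneg_right h1 hC0
      have h3 : ((-Bq) / (Cq + 1)) * Cq ≤ -Bq := by
        rw [div_mul_eq_mul_div, div_le_iff₀ (by linarith : (0:ℝ) < Cq + 1)]
        nlinarith
      linarith
    have hx : (fun i => θ (t + 1) i + s * (θs i - θ (t + 1) i)) ∈ F := by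
      have h := hFconv (hproj t ht).1 hθs (by linarith : (0:ℝ) ≤ 1 - s) hs0.le (by ring)
      convert h using 1
      funext i
      simp only [Pi.add_apply, Pi.smul_apply, smul_eq_mul]
      ring
    have hmin := (hproj t ht).2 _ hx
    have hexp : ∑ i, (lr t i)⁻¹ *
        ((θ (t + 1) i + s * (θs i - θ (t + 1) i)) - (θ t i - lr t i * g t i)) ^ 2
        = (∑ i, (lr t i)⁻¹ * (θ (t + 1) i - (θ t i - lr t i * g t i)) ^ 2)
          + 2 * s * Bq + s ^ 2 * Cq := by
      rw [hBq, hCq, Finset.mul_sum, Finset.mul_sum, ← Finset.sum_add_distrib,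
        ← Finset.sum_add_distrib]
      exact Finset.sum_congr rfl fun i _ => by ring
    rw [hexp] at hmin
    have h0 : 0 ≤ 2 * s * Bq + s ^ 2 * Cq := by linarith
    nlinarith [mul_le_mul_of_nonneg_left hsC hs0.le, mul_neg_of_pos_of_neg hs0 hBneg]
  -- per-step inequality
  have hstep : ∀ t ∈ Finset.Icc 1 T,
      f t (θ t) - f t θs ≤ (A t - B t) / 2 + (∑ i, lr t i * g t i ^ 2) / 2 := by
    intro t ht
    have ht1 : 1 ≤ t := (Finset.mem_Icc.1 ht).1
    have hsub := hsubgrad t ht θs hθs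
    have hVIt := hVI t ht
    have hD0 : 0 ≤ ∑ i, (lr t i)⁻¹ * (θ (t + 1) i - (θ t i - lr t i * g t i)) ^ 2 :=
      Finset.sum_nonneg fun i _ =>
        mul_nonneg (inv_nonneg.2 (hlrpos t ht1 i).le) (sq_nonneg _)
    have hexp2 : ∑ i, (lr t i)⁻¹ * (θs i - (θ t i - lr t i * g t i)) ^ 2
        = (∑ i, (lr t i)⁻¹ * (θ (t + 1) i - (θ t i - lr t i * g t i)) ^ 2)
          + 2 * (∑ i, (lr t i)⁻¹ *
              ((θ (t + 1) i - (θ t i - lr t i * g t i)) * (θs i - θ (t + 1) i)))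
          + B t := by
      rw [hB, Finset.mul_sum, ← Finset.sum_add_distrib, ← Finset.sum_add_distrib]
      exact Finset.sum_congr rfl fun i _ => by ring
    have hA2 : ∑ i, (lr t i)⁻¹ * (θs i - (θ t i - lr t i * g t i)) ^ 2
        = A t - 2 * (∑ i, g t i * (θ t i - θs i)) + ∑ i, lr t i * g t i ^ 2 := by
      rw [hA, Finset.mul_sum, ← Finset.sum_sub_distrib, ← Finset.sum_add_distrib]
      refine Finset.sum_congr rfl fun i _ => ?_
      have hne : lr t i ≠ 0 := (hlrpos t ht1 i).ne'
      field_simp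
      ring
    have key : B t ≤ A t - 2 * (∑ i, g t i * (θ t i - θs i)) + ∑ i, lr t i * g t i ^ 2 := by
      linarith [hexp2, hA2]
    have hsub' : f t (θ t) - f t θs ≤ ∑ i, g t i * (θ t i - θs i) := by
      have he : ∑ i, g t i * (θs i - θ t i) = -∑ i, g t i * (θ t i - θs i) := by
        rw [← Finset.sum_neg_distrib]
        exact Finset.sum_congr rfl fun i _ => by ring
      linarith [hsub, he.le, he.ge]
    linarith
  -- summed inequality
  have hsum : ∑ t ∈ Finset.Icc 1 T, (f t (θ t) - f t θs)
      ≤ (∑ t ∈ Finset.Icc 1 T, (A t - B t)) / 2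
        + (∑ t ∈ Finset.Icc 1 T, ∑ i, lr t i * g t i ^ 2) / 2 := by
    calc ∑ t ∈ Finset.Icc 1 T, (f t (θ t) - f t θs)
        ≤ ∑ t ∈ Finset.Icc 1 T, ((A t - B t) / 2 + (∑ i, lr t i * g t i ^ 2) / 2) :=
          Finset.sum_le_sum hstep
      _ = _ := by rw [Finset.sum_add_distrib, Finset.sum_div, Finset.sum_div]
  -- middle (telescoping) term bound
  have hUb0 : ∀ t : ℕ, 2 ≤ t →
      0 ≤ (Real.sqrt t - Real.sqrt ((t-1:ℕ):ℝ)) + 2 * Real.sqrt t * lam ^ (t-1) := by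
    intro t ht2
    have h1 : Real.sqrt ((t-1:ℕ):ℝ) ≤ Real.sqrt t :=
      Real.sqrt_le_sqrt (by exact_mod_cast Nat.sub_le t 1)
    nlinarith [Real.sqrt_nonneg (t:ℝ), hlamt0 (t-1)]
  have hmid : ∀ t ∈ Finset.Icc 2 T, A t - B (t - 1)
      ≤ Dinf ^ 2 * d * (((Real.sqrt t - Real.sqrt ((t-1:ℕ):ℝ))
          + 2 * Real.sqrt t * lam ^ (t-1)) / (η * (1 - lam))) := by
    intro t ht2
    obtain ⟨ht2a, ht2b⟩ := Finset.mem_Icc.1 ht2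
    have ht1 : 1 ≤ t := by omega
    have htm1 : 1 ≤ t - 1 := by omega
    have htsub : t - 1 + 1 = t := by omega
    have hθtF : θ t ∈ F := hθF t (Finset.mem_Icc.2 ⟨ht1, ht2b⟩)
    have hBt : B (t-1) = ∑ i, (lr (t-1) i)⁻¹ * (θ t i - θs i) ^ 2 := by
      rw [hB]; simp only [htsub]
    set N : ℝ := (Real.sqrt t - Real.sqrt ((t-1:ℕ):ℝ)) + 2 * Real.sqrt t * lam ^ (t-1) with hN
    have hN0 : 0 ≤ N := hUb0 t ht2a
    have hdiff : ∀ i, (lr t i)⁻¹ - (lr (t-1) i)⁻¹ ≤ N / (η * (1 - lam)) := by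
      intro i
      have h1 := hinv_up t ht1 i
      have h2 := hinv_lo (t-1) htm1 i
      have hsu0 : 0 ≤ Real.sqrt ((t-1:ℕ):ℝ) := Real.sqrt_nonneg _
      have hsu_le : Real.sqrt ((t-1:ℕ):ℝ) ≤ Real.sqrt t :=
        Real.sqrt_le_sqrt (by exact_mod_cast Nat.sub_le t 1)
      have hab : lam ^ t ≤ lam ^ (t-1) := pow_le_pow_of_le_one hlam0 hlam1.le (by omega)
      have ha_lam : lam ^ t ≤ lam := hlam_le t ht1
      have hden1 : 0 < η * (1 - lam ^ t) := mul_pos hη (by linarith [hlamt_lt1 t ht1])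
      have hden2 : 0 < η * (1 + lam ^ (t-1)) := mul_pos hη (by nlinarith [hlamt0 (t-1)])
      have heq : Real.sqrt t / (η * (1 - lam ^ t))
            - Real.sqrt ((t-1:ℕ):ℝ) / (η * (1 + lam ^ (t-1)))
          = (Real.sqrt t * (1 + lam ^ (t-1)) - Real.sqrt ((t-1:ℕ):ℝ) * (1 - lam ^ t))
            / (η * (1 - lam ^ t) * (1 + lam ^ (t-1))) := by
        have hne1 : (1:ℝ) - lam ^ t ≠ 0 := (by linarith [hlamt_lt1 t ht1] : (0:ℝ) < 1 - lam ^ t).ne'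
        have hne2 : (1:ℝ) + lam ^ (t-1) ≠ 0 := (by nlinarith [hlamt0 (t-1)] : (0:ℝ) < 1 + lam ^ (t-1)).ne'
        field_simp
      have hM0 : 0 ≤ Real.sqrt t * (1 + lam ^ (t-1)) - Real.sqrt ((t-1:ℕ):ℝ) * (1 - lam ^ t) := by
        nlinarith [hlamt0 (t-1), hlamt0 t, hlamt_lt1 t ht1]
      have hMN : Real.sqrt t * (1 + lam ^ (t-1)) - Real.sqrt ((t-1:ℕ):ℝ) * (1 - lam ^ t) ≤ N := by
        rw [hN]
        nlinarith [mul_le_mul hsu_le hab (hlamt0 t) (Real.sqrt_nonneg (t:ℝ))]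
      have hdd : η * (1 - lam) ≤ η * (1 - lam ^ t) * (1 + lam ^ (t-1)) := by
        nlinarith [hlamt0 (t-1), hlamt_lt1 t ht1]
      have h3 : (Real.sqrt t * (1 + lam ^ (t-1)) - Real.sqrt ((t-1:ℕ):ℝ) * (1 - lam ^ t))
            / (η * (1 - lam ^ t) * (1 + lam ^ (t-1))) ≤ N / (η * (1 - lam)) :=
        div_le_div₀ hN0 hMN (mul_pos hη h1lam) hdd
      linarith [heq.le]
    have hcoord : ∀ i, ((lr t i)⁻¹ - (lr (t-1) i)⁻¹) * (θ t i - θs i) ^ 2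
        ≤ Dinf ^ 2 * (N / (η * (1 - lam))) := by
      intro i
      have hdi := hFdiam (θ t) hθtF θs hθs i
      have hsq : (θ t i - θs i) ^ 2 ≤ Dinf ^ 2 := by
        nlinarith [hdi, abs_nonneg (θ t i - θs i), sq_abs (θ t i - θs i)]
      have hU0 : 0 ≤ N / (η * (1 - lam)) := div_nonneg hN0 (mul_pos hη h1lam).le
      calc ((lr t i)⁻¹ - (lr (t-1) i)⁻¹) * (θ t i - θs i) ^ 2
          ≤ (N / (η * (1 - lam))) * (θ t i - θs i) ^ 2 :=
            mul_le_mul_of_nonneg_right (hdiff i) (sq_nonneg _)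
        _ ≤ (N / (η * (1 - lam))) * Dinf ^ 2 := mul_le_mul_of_nonneg_left hsq hU0
        _ = Dinf ^ 2 * (N / (η * (1 - lam))) := by ring
    calc A t - B (t-1) = ∑ i, ((lr t i)⁻¹ - (lr (t-1) i)⁻¹) * (θ t i - θs i) ^ 2 := by
          rw [hA, hBt, ← Finset.sum_sub_distrib]
          exact Finset.sum_congr rfl fun i _ => by ring
      _ ≤ ∑ _i : Fin d, Dinf ^ 2 * (N / (η * (1 - lam))) :=
          Finset.sum_le_sum fun i _ => hcoord i
      _ = Dinf ^ 2 * d * (N / (η * (1 - lam))) := by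
          rw [Finset.sum_const, Finset.card_univ, Fintype.card_fin, nsmul_eq_mul]
          ring
  have hmidsum : ∑ t ∈ Finset.Icc 2 T, (A t - B (t - 1))
      ≤ Dinf ^ 2 * d * (((Real.sqrt T - 1) + 2 * Real.sqrt T * (lam / (1 - lam)))
          / (η * (1 - lam))) := by
    calc ∑ t ∈ Finset.Icc 2 T, (A t - B (t - 1))
        ≤ ∑ t ∈ Finset.Icc 2 T, Dinf ^ 2 * d * (((Real.sqrt t - Real.sqrt ((t-1:ℕ):ℝ))
            + 2 * Real.sqrt t * lam ^ (t-1)) / (η * (1 - lam))) := Finset.sum_le_sum hmid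
      _ = Dinf ^ 2 * d / (η * (1 - lam)) * ∑ t ∈ Finset.Icc 2 T,
            ((Real.sqrt t - Real.sqrt ((t-1:ℕ):ℝ)) + 2 * Real.sqrt t * lam ^ (t-1)) := by
          rw [Finset.mul_sum]
          exact Finset.sum_congr rfl fun t _ => by ring
      _ ≤ Dinf ^ 2 * d / (η * (1 - lam))
            * ((Real.sqrt T - 1) + 2 * Real.sqrt T * (lam / (1 - lam))) := by
          apply mul_le_mul_of_nonneg_left _ (by positivity)
          rw [Finset.sum_add_distrib]
          have htele : ∑ t ∈ Finset.Icc 2 T, (Real.sqrt (t:ℕ) - Real.sqrt ((t-1:ℕ):ℝ))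
              = Real.sqrt T - 1 := by
            have h := tel_sum (fun n : ℕ => Real.sqrt n) T hT
            simpa using h
          have hgeo : ∑ t ∈ Finset.Icc 2 T, 2 * Real.sqrt t * lam ^ (t-1)
              ≤ 2 * Real.sqrt T * (lam / (1 - lam)) := by
            have hTs0 : 0 ≤ 2 * Real.sqrt (T:ℝ) := by positivity
            calc ∑ t ∈ Finset.Icc 2 T, 2 * Real.sqrt t * lam ^ (t-1)
                ≤ ∑ t ∈ Finset.Icc 2 T, 2 * Real.sqrt T * lam ^ (t-1) := by
                  apply Finset.sum_le_sum
                  intro t htm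
                  have hle : Real.sqrt (t:ℝ) ≤ Real.sqrt (T:ℝ) := by
                    apply Real.sqrt_le_sqrt
                    exact_mod_cast (Finset.mem_Icc.1 htm).2
                  apply mul_le_mul_of_nonneg_right _ (hlamt0 (t-1))
                  linarith
              _ = 2 * Real.sqrt T * ∑ t ∈ Finset.Icc 2 T, lam ^ (t-1) := by
                  rw [Finset.mul_sum]
              _ ≤ 2 * Real.sqrt T * (lam / (1 - lam)) := by
                  apply mul_le_mul_of_nonneg_left _ hTs0
                  have h4 := geom_aux lam hlam1 T hT
                  have h5 : (lam - lam ^ T) / (1 - lam) ≤ lam / (1 - lam) :=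
                    (div_le_div_iff_of_pos_right h1lam).2 (by linarith [hlamt0 T])
                  linarith
          linarith [htele, hgeo]
      _ = Dinf ^ 2 * d * (((Real.sqrt T - 1) + 2 * Real.sqrt T * (lam / (1 - lam)))
            / (η * (1 - lam))) := by ring
  -- gradient term bound
  have hgrad1 : ∀ t ∈ Finset.Icc 1 T,
      ∑ i, lr t i * g t i ^ 2 ≤ 2 * η * G2 ^ 2 * (Real.sqrt t)⁻¹ := by
    intro t ht
    have ht1 : 1 ≤ t := (Finset.mem_Icc.1 ht).1
    have hg2 : ∑ i, g t i ^ 2 ≤ G2 ^ 2 := by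
      have h0 : 0 ≤ ∑ i, g t i ^ 2 := Finset.sum_nonneg fun i _ => sq_nonneg _
      nlinarith [hg t ht, Real.sq_sqrt h0, Real.sqrt_nonneg (∑ i, g t i ^ 2)]
    have hlr2 : ∀ i, lr t i ≤ 2 * η * (Real.sqrt t)⁻¹ := by
      intro i
      have hs := hsqp t ht1
      have hkey : η / Real.sqrt t * (1 + lam ^ t) ≤ 2 * η * (Real.sqrt t)⁻¹ := by
        rw [div_eq_mul_inv]
        nlinarith [hlamt_lt1 t ht1, mul_pos hη (inv_pos.2 hs)]
      linarith [(hlrb t ht1 i).2]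
    calc ∑ i, lr t i * g t i ^ 2 ≤ ∑ i, 2 * η * (Real.sqrt t)⁻¹ * g t i ^ 2 :=
        Finset.sum_le_sum fun i _ => mul_le_mul_of_nonneg_right (hlr2 i) (sq_nonneg _)
      _ = 2 * η * (Real.sqrt t)⁻¹ * ∑ i, g t i ^ 2 := by rw [Finset.mul_sum]
      _ ≤ 2 * η * (Real.sqrt t)⁻¹ * G2 ^ 2 := by
          apply mul_le_mul_of_nonneg_left hg2
          positivity
      _ = 2 * η * G2 ^ 2 * (Real.sqrt t)⁻¹ := by ring
  have hgradsum : ∑ t ∈ Finset.Icc 1 T, ∑ i, lr t i * g t i ^ 2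
      ≤ 2 * η * G2 ^ 2 * (2 * Real.sqrt T - 1) := by
    calc ∑ t ∈ Finset.Icc 1 T, ∑ i, lr t i * g t i ^ 2
        ≤ ∑ t ∈ Finset.Icc 1 T, 2 * η * G2 ^ 2 * (Real.sqrt t)⁻¹ := Finset.sum_le_sum hgrad1
      _ = 2 * η * G2 ^ 2 * ∑ t ∈ Finset.Icc 1 T, (Real.sqrt t)⁻¹ := by rw [Finset.mul_sum]
      _ ≤ 2 * η * G2 ^ 2 * (2 * Real.sqrt T - 1) := by
          apply mul_le_mul_of_nonneg_left (sum_inv_sqrt T hT)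
          positivity
  -- first-step bound
  have h1T : (1:ℕ) ∈ Finset.Icc 1 T := Finset.mem_Icc.2 ⟨le_rfl, hT⟩
  have hA1 : A 1 ≤ Dinf ^ 2 * d / (η * (1 - lam)) := by
    have hθ1 : θ 1 ∈ F := hθF 1 h1T
    have hper : ∀ i : Fin d, (lr 1 i)⁻¹ * (θ 1 i - θs i) ^ 2 ≤ Dinf ^ 2 / (η * (1 - lam)) := by
      intro i
      have hup := hinv_up 1 le_rfl i
      have hsq1' : Real.sqrt ((1:ℕ):ℝ) = 1 := by simp
      rw [hsq1', pow_one] at hup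
      have hup' : (lr 1 i)⁻¹ ≤ 1 / (η * (1 - lam)) := hup
      have hsq : (θ 1 i - θs i) ^ 2 ≤ Dinf ^ 2 := by
        have hdi := hFdiam (θ 1) hθ1 θs hθs i
        nlinarith [hdi, abs_nonneg (θ 1 i - θs i), sq_abs (θ 1 i - θs i)]
      have hinv0 : 0 ≤ (lr 1 i)⁻¹ := inv_nonneg.2 (hlrpos 1 le_rfl i).le
      calc (lr 1 i)⁻¹ * (θ 1 i - θs i) ^ 2 ≤ (1 / (η * (1 - lam))) * Dinf ^ 2 :=
          mul_le_mul hup' hsq (sq_nonneg _) (by positivity)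
        _ = Dinf ^ 2 / (η * (1 - lam)) := by ring
    calc A 1 = ∑ i, (lr 1 i)⁻¹ * (θ 1 i - θs i) ^ 2 := by rw [hA]
      _ ≤ ∑ _i : Fin d, Dinf ^ 2 / (η * (1 - lam)) := Finset.sum_le_sum fun i _ => hper i
      _ = d * (Dinf ^ 2 / (η * (1 - lam))) := by
          rw [Finset.sum_const, Finset.card_univ, Fintype.card_fin, nsmul_eq_mul]
      _ = Dinf ^ 2 * d / (η * (1 - lam)) := by ring
  have hBT0 : 0 ≤ B T := by
    rw [hB]
    exact Finset.sum_nonneg fun i _ => mul_nonneg (inv_nonneg.2 (hlrpos T hT i).le) (sq_nonneg _)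
  -- final numeric comparisons
  have hs1 : 1 ≤ Real.sqrt (T:ℝ) := hsq1 T hT
  set s : ℝ := Real.sqrt (T:ℝ) with hsdef
  have main1 : Dinf ^ 2 * d * (((s - 1) + 2 * s * (lam / (1 - lam))) / (η * (1 - lam))) / 2
      ≤ Dinf ^ 2 * d / (η * (1 - lam) ^ 3) * ((5 - 4 * lam) * s + 2 * lam - 1) := by
    have hK : (0:ℝ) ≤ Dinf ^ 2 * (d:ℝ) := by positivity
    have hx : ((s - 1) + 2 * s * (lam / (1 - lam))) / (η * (1 - lam)) / 2
        = ((s - 1) * (1 - lam) + 2 * s * lam) / (2 * η * (1 - lam) ^ 2) := by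
      field_simp
    have hy : ((s - 1) * (1 - lam) + 2 * s * lam) / (2 * η * (1 - lam) ^ 2)
        ≤ ((5 - 4 * lam) * s + 2 * lam - 1) / (η * (1 - lam) ^ 3) := by
      rw [div_le_div_iff₀ (by positivity) (by positivity)]
      have hbr : ((s - 1) * (1 - lam) + 2 * s * lam) * (1 - lam)
          ≤ 2 * ((5 - 4 * lam) * s + 2 * lam - 1) := by
        nlinarith [mul_nonneg (show (0:ℝ) ≤ lam ^ 2 - 8 * lam + 9 by nlinarith [sq_nonneg lam])
          (show (0:ℝ) ≤ s - 1 by linarith), sq_nonneg lam]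
      nlinarith [mul_le_mul_of_nonneg_left hbr (mul_nonneg hη.le (sq_nonneg (1 - lam)))]
    calc Dinf ^ 2 * d * (((s - 1) + 2 * s * (lam / (1 - lam))) / (η * (1 - lam))) / 2
        = Dinf ^ 2 * d * (((s - 1) + 2 * s * (lam / (1 - lam))) / (η * (1 - lam)) / 2) := by
          ring
      _ = Dinf ^ 2 * d * (((s - 1) * (1 - lam) + 2 * s * lam) / (2 * η * (1 - lam) ^ 2)) := by
          rw [hx]
      _ ≤ Dinf ^ 2 * d * (((5 - 4 * lam) * s + 2 * lam - 1) / (η * (1 - lam) ^ 3)) :=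
          mul_le_mul_of_nonneg_left hy hK
      _ = Dinf ^ 2 * d / (η * (1 - lam) ^ 3) * ((5 - 4 * lam) * s + 2 * lam - 1) := by
          ring
  have main2 : 2 * η * G2 ^ 2 * (2 * s - 1) / 2 ≤ G2 ^ 2 * d * η * (2 * s - 1) := by
    have hd1 : (1:ℝ) ≤ (d:ℝ) := by exact_mod_cast hd
    nlinarith [mul_nonneg (mul_nonneg (sq_nonneg G2) hη.le) (show (0:ℝ) ≤ 2 * s - 1 by linarith)]
  have heq2 : Dinf ^ 2 * d / (η * (1 - lam)) / 2 = Dinf ^ 2 * d / (2 * η * (1 - lam)) := by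
    rw [div_div, show η * (1 - lam) * 2 = 2 * η * (1 - lam) from by ring]
  -- assemble
  have htel := tel_sum2 A B T hT
  linarith [hsum, htel, hA1, hBT0, hmidsum, hgradsum, main1, main2, heq2]
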